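/- Let (Ω, 𝓕, μ) be a probability space and let X, Y : Ω → ℝ be random variables with finite second moments (X, Y ∈ L²(μ)). Then ∫ (X−Y)² dμ ≥ (E[X] − E[Y])² + (√Var(X) − √Var(Y))². -/

import Mathlib

open MeasureTheory ProbabilityTheory

/-- Scalar Gelbrich bound: for square-integrable real random variables `X, Y` on a
probability space, `E[(X−Y)²] ≥ (E[X] − E[Y])² + (√Var(X) − √Var(Y))²`. -/
theorem scalar_gelbrich_bound
    {Ω : Type*} [MeasurableSpace Ω] (μ : Measure Ω) [IsProbabilityMeasure μ]
    (X Y : Ω → ℝ) (hX : MemLp X 2 μ) (hY : MemLp Y 2 μ) :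
    (∫ ω, X ω ∂μ - ∫ ω, Y ω ∂μ) ^ 2
        + (Real.sqrt (variance X μ) - Real.sqrt (variance Y μ)) ^ 2
      ≤ ∫ ω, (X ω - Y ω) ^ 2 ∂μ := by
  set a := ∫ ω, X ω ∂μ with ha
  set b := ∫ ω, Y ω ∂μ with hb
  set f : Ω → ℝ := fun ω => X ω - a with hfdef
  set g : Ω → ℝ := fun ω => Y ω - b with hgdef
  have hf : MemLp f 2 μ := hX.sub (memLp_const a)
  have hg : MemLp g 2 μ := hY.sub (memLp_const b)
  have hf2 : Integrable (fun ω => f ω ^ 2) μ := hf.integrable_sq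
  have hg2 : Integrable (fun ω => g ω ^ 2) μ := hg.integrable_sq
  have hs2 : Integrable (fun ω => (f ω + g ω) ^ 2) μ := by
    have := (hf.add hg).integrable_sq
    simpa using this
  have hfgmul : Integrable (fun ω => f ω * g ω) μ := by
    have : (fun ω => f ω * g ω)
        = fun ω => ((f ω + g ω) ^ 2 - f ω ^ 2 - g ω ^ 2) / 2 := by
      funext ω; ring
    rw [this]
    exact ((hs2.sub hf2).sub hg2).div_const 2
  have hfi : Integrable f μ := hf.integrable one_le_two
  have hgi : Integrable g μ := hg.integrable one_le_two
  have hXi : Integrable X μ := hX.integrable one_le_two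
  have hYi : Integrable Y μ := hY.integrable one_le_two
  -- means of centered variables are zero
  have hfm : ∫ ω, f ω ∂μ = 0 := by
    simp [hfdef, integral_sub hXi (integrable_const a), ← ha]
  have hgm : ∫ ω, g ω ∂μ = 0 := by
    simp [hgdef, integral_sub hYi (integrable_const b), ← hb]
  -- variance as integral of the square of the centered variable
  have hVX : variance X μ = ∫ ω, f ω ^ 2 ∂μ := by
    rw [variance_eq_integral hX.aemeasurable]
  have hVY : variance Y μ = ∫ ω, g ω ^ 2 ∂μ := by
    rw [variance_eq_integral hY.aemeasurable]
  have hVXnn : 0 ≤ ∫ ω, f ω ^ 2 ∂μ := integral_nonneg fun ω => sq_nonneg _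
  have hVYnn : 0 ≤ ∫ ω, g ω ^ 2 ∂μ := integral_nonneg fun ω => sq_nonneg _
  -- Cauchy–Schwarz via Hölder with p = q = 2
  have hCS : ∫ ω, f ω * g ω ∂μ ≤
      Real.sqrt (∫ ω, f ω ^ 2 ∂μ) * Real.sqrt (∫ ω, g ω ^ 2 ∂μ) := by
    have hpq : Real.HolderConjugate 2 2 := Real.HolderConjugate.two_two
    have hf' : MemLp f (ENNReal.ofReal 2) μ := by
      simpa [ENNReal.ofReal_ofNat] using hf
    have hg' : MemLp g (ENNReal.ofReal 2) μ := by
      simpa [ENNReal.ofReal_ofNat] using hg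
    have h := integral_mul_norm_le_Lp_mul_Lq hpq hf' hg'
    have h1 : ∫ ω, f ω * g ω ∂μ ≤ ∫ ω, ‖f ω‖ * ‖g ω‖ ∂μ := by
      refine integral_mono hfgmul (by simpa [abs_mul] using hfgmul.abs) fun ω => ?_
      calc f ω * g ω ≤ |f ω * g ω| := le_abs_self _
        _ = ‖f ω‖ * ‖g ω‖ := by rw [abs_mul]; rfl
    have hfr : ∫ ω, ‖f ω‖ ^ (2 : ℝ) ∂μ = ∫ ω, f ω ^ 2 ∂μ := by
      refine integral_congr_ae (ae_of_all _ fun ω => ?_)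
      simp only [Real.rpow_two, Real.norm_eq_abs, sq_abs]
    have hgr : ∫ ω, ‖g ω‖ ^ (2 : ℝ) ∂μ = ∫ ω, g ω ^ 2 ∂μ := by
      refine integral_congr_ae (ae_of_all _ fun ω => ?_)
      simp only [Real.rpow_two, Real.norm_eq_abs, sq_abs]
    calc ∫ ω, f ω * g ω ∂μ ≤ ∫ ω, ‖f ω‖ * ‖g ω‖ ∂μ := h1
      _ ≤ (∫ ω, ‖f ω‖ ^ (2 : ℝ) ∂μ) ^ (1 / (2:ℝ)) * (∫ ω, ‖g ω‖ ^ (2 : ℝ) ∂μ) ^ (1 / (2:ℝ)) := h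
      _ = Real.sqrt (∫ ω, f ω ^ 2 ∂μ) * Real.sqrt (∫ ω, g ω ^ 2 ∂μ) := by
          rw [hfr, hgr, Real.sqrt_eq_rpow, Real.sqrt_eq_rpow]
  -- decompose the integral of (X - Y)^2
  have i1 : Integrable (fun ω => (a - b) ^ 2 + f ω ^ 2) μ := (integrable_const _).add hf2
  have i2 : Integrable (fun ω => 2 * (f ω * g ω)) μ := hfgmul.const_mul 2
  have i3 : Integrable (fun ω => (a - b) ^ 2 + f ω ^ 2 - 2 * (f ω * g ω)) μ := i1.sub i2
  have i4 : Integrable (fun ω => (a - b) ^ 2 + f ω ^ 2 - 2 * (f ω * g ω) + g ω ^ 2) μ :=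
    i3.add hg2
  have i0 : Integrable (fun ω => f ω - g ω) μ := hfi.sub hgi
  have i5 : Integrable (fun ω => 2 * (a - b) * (f ω - g ω)) μ := i0.const_mul _
  have hdecomp : ∫ ω, (X ω - Y ω) ^ 2 ∂μ
      = (a - b) ^ 2 + ∫ ω, f ω ^ 2 ∂μ - 2 * ∫ ω, f ω * g ω ∂μ + ∫ ω, g ω ^ 2 ∂μ := by
    have hpt : ∀ ω, (X ω - Y ω) ^ 2
        = (a - b) ^ 2 + f ω ^ 2 - 2 * (f ω * g ω) + g ω ^ 2
          + 2 * (a - b) * (f ω - g ω) := by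
      intro ω; simp only [hfdef, hgdef]; ring
    rw [integral_congr_ae (ae_of_all _ hpt), integral_add i4 i5, integral_add i3 hg2,
      integral_sub i1 i2, integral_add (integrable_const _) hf2,
      integral_const_mul, integral_const_mul, integral_sub hfi hgi, hfm, hgm]
    simp
  -- expand the sqrt term
  have hsq : (Real.sqrt (variance X μ) - Real.sqrt (variance Y μ)) ^ 2
      = ∫ ω, f ω ^ 2 ∂μ + ∫ ω, g ω ^ 2 ∂μ
        - 2 * (Real.sqrt (∫ ω, f ω ^ 2 ∂μ) * Real.sqrt (∫ ω, g ω ^ 2 ∂μ)) := by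
    rw [hVX, hVY, sub_sq, Real.sq_sqrt hVXnn, Real.sq_sqrt hVYnn]
    ring
  rw [hdecomp, hsq]
  nlinarith [hCS]
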